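/- Under the ideal generative model, assume the confidences are integrable in the sense that E[|log C_1| + |log(1−C_1)|] < ∞, and assume the confidences are informative, i.e. P(C_1 = 1/K) = 0. Then the normalized posteriors satisfy X_1(m) → 1 almost surely and X_k(m) → 0 almost surely for every k ≠ 1 as m → ∞; consequently P(argmax_{j ∈ {1,...,K}} X_j(m) = 1) → 1 as m → ∞. -/

import Mathlib

open MeasureTheory ProbabilityTheory Filter
open scoped Topology ENNReal

/-- One-versus-rest likelihood: for a response `r` and a confidence `c ∈ (0,1)`, under
hypothesis `I = i` the likelihood is `c` if `r = i` and `(1-c)/(K-1)` otherwise.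
Candidates are indexed by `Fin K`, with index `0` playing the role of the index `1`
(the correct answer). -/
noncomputable def ell (K : ℕ) (i r : Fin K) (c : ℝ) : ℝ :=
  if r = i then c else (1 - c) / ((K : ℝ) - 1)

/-- Unnormalized posterior `A j (m) = ∏_{t=1}^m ℓ_j (R_t, C_t)`. -/
noncomputable def Apost {Ω : Type*} (K : ℕ) (R : ℕ → Ω → Fin K) (C : ℕ → Ω → ℝ)
    (j : Fin K) (m : ℕ) (ω : Ω) : ℝ :=
  ∏ t ∈ Finset.range m, ell K j (R t ω) (C t ω)

/-- Normalized posterior `X j (m) = A j (m) / ∑ k, A k (m)`. -/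
noncomputable def Xpost {Ω : Type*} (K : ℕ) (R : ℕ → Ω → Fin K) (C : ℕ → Ω → ℝ)
    (j : Fin K) (m : ℕ) (ω : Ω) : ℝ :=
  Apost K R C j m ω / ∑ k : Fin K, Apost K R C k m ω

/-- If partial averages converge to a negative limit, the sums tend to `-∞`. -/
lemma sum_tendsto_atBot_aux {S : ℕ → ℝ} {L : ℝ} (hL : L < 0)
    (h : Tendsto (fun n : ℕ => S n / n) atTop (𝓝 L)) : Tendsto S atTop atBot := by
  have h2 : ∀ᶠ n : ℕ in atTop, S n / n < L / 2 :=
    h.eventually (gt_mem_nhds (by linarith : L < L / 2))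
  have hg : Tendsto (fun n : ℕ => (L / 2) * (n : ℝ)) atTop atBot :=
    Tendsto.const_mul_atTop_of_neg (by linarith) tendsto_natCast_atTop_atTop
  refine tendsto_atBot_mono' atTop ?_ hg
  filter_upwards [h2, eventually_ge_atTop 1] with n h1 hn
  have hnpos : (0 : ℝ) < (n : ℝ) := by exact_mod_cast hn
  have := (div_lt_iff₀ hnpos).mp h1
  linarith

/-- If a.s. we are eventually in `E m`, then `μ (E m) → 1`. -/
lemma tendsto_measure_one_aux {Ω : Type*} [MeasurableSpace Ω] (μ : Measure Ω)
    [IsProbabilityMeasure μ] {E : ℕ → Set Ω} (hE : ∀ m, MeasurableSet (E m))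
    (h : ∀ᵐ ω ∂μ, ∀ᶠ m in atTop, ω ∈ E m) :
    Tendsto (fun m => μ (E m)) atTop (𝓝 1) := by
  set I : ℕ → Set Ω := fun N => ⋂ m, ⋂ (_ : N ≤ m), E m with hI
  have hImeas : ∀ N, MeasurableSet (I N) := fun N =>
    MeasurableSet.iInter fun m => MeasurableSet.iInter fun _ => hE m
  have hImono : Monotone I := by
    intro a b hab x hx
    exact Set.mem_iInter₂.2 fun m hm => Set.mem_iInter₂.1 hx m (hab.trans hm)
  have hU : μ (⋃ N, I N) = 1 := by
    rw [← prob_compl_eq_zero_iff (MeasurableSet.iUnion hImeas)]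
    have h' : ∀ᵐ ω ∂μ, ω ∈ ⋃ N, I N := by
      filter_upwards [h] with ω hω
      obtain ⟨N, hN⟩ := eventually_atTop.1 hω
      exact Set.mem_iUnion.2 ⟨N, Set.mem_iInter₂.2 fun m hm => hN m hm⟩
    have := ae_iff.1 h'
    simpa [Set.compl_def] using this
  have hlim : Tendsto (fun N => μ (I N)) atTop (𝓝 1) := by
    have := tendsto_measure_iUnion_atTop (μ := μ) hImono
    rwa [hU] at this
  refine tendsto_of_tendsto_of_tendsto_of_le_of_le hlim tendsto_const_nhds
    (fun m => measure_mono fun x hx => Set.mem_iInter₂.1 hx m le_rfl)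
    (fun m => prob_le_one)

theorem stmt0 {Ω : Type*} [MeasurableSpace Ω] (μ : Measure Ω) [IsProbabilityMeasure μ]
    (K : ℕ) [NeZero K] (hK : 2 ≤ K)
    (R : ℕ → Ω → Fin K) (C : ℕ → Ω → ℝ)
    (hRmeas : ∀ t, Measurable (R t)) (hCmeas : ∀ t, Measurable (C t))
    -- the pairs (R t, C t) are i.i.d.
    (hindep : iIndepFun (fun t ω => (R t ω, C t ω)) μ)
    (hident : ∀ t, IdentDistrib (fun ω => (R t ω, C t ω)) (fun ω => (R 0 ω, C 0 ω)) μ μ)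
    -- confidences take values in (0,1)
    (hC01 : ∀ t, ∀ᵐ ω ∂μ, C t ω ∈ Set.Ioo (0 : ℝ) 1)
    -- conditionally on `C t = c`, the response is correct w.p. `c`, and equals each
    -- wrong index w.p. `(1-c)/(K-1)`
    (hcond : ∀ t, ∀ j : Fin K,
      μ[(fun ω => if R t ω = j then (1 : ℝ) else 0) |
          MeasurableSpace.comap (C t) inferInstance]
        =ᵐ[μ] fun ω => if j = 0 then C t ω else (1 - C t ω) / ((K : ℝ) - 1))
    -- integrability of the log-confidences
    (hint : Integrable (fun ω => |Real.log (C 0 ω)| + |Real.log (1 - C 0 ω)|) μ)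
    -- informativeness
    (hinfo : μ {ω | C 0 ω = 1 / (K : ℝ)} = 0) :
    (∀ᵐ ω ∂μ, Tendsto (fun m => Xpost K R C 0 m ω) atTop (nhds 1)) ∧
    (∀ k : Fin K, k ≠ 0 →
      ∀ᵐ ω ∂μ, Tendsto (fun m => Xpost K R C k m ω) atTop (nhds 0)) ∧
    Tendsto
      (fun m => μ {ω | ∀ k : Fin K, k ≠ 0 → Xpost K R C k m ω < Xpost K R C 0 m ω})
      atTop (nhds 1) := by
  classical
  have hK2 : (2 : ℝ) ≤ (K : ℝ) := by exact_mod_cast hK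
  have hKpos : (0 : ℝ) < (K : ℝ) - 1 := by linarith
  have hK1 : (1 : ℝ) ≤ (K : ℝ) - 1 := by linarith
  -- the log-likelihood-ratio function
  set g : ℝ → ℝ := fun c => Real.log c - Real.log ((1 - c) / ((K : ℝ) - 1)) with hg_def
  have hg_meas : Measurable g :=
    Real.measurable_log.sub
      (Real.measurable_log.comp ((measurable_const.sub measurable_id).div_const _))
  set f : Fin K → Fin K × ℝ → ℝ :=
    fun k p => Real.log (ell K k p.1 p.2) - Real.log (ell K 0 p.1 p.2) with hf_def
  have hell_meas : ∀ j : Fin K, Measurable (fun p : Fin K × ℝ => ell K j p.1 p.2) := by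
    intro j
    unfold ell
    exact Measurable.ite (measurable_fst (measurableSet_singleton j)) measurable_snd
      ((measurable_const.sub measurable_snd).div_const _)
  have hf_meas : ∀ k, Measurable (f k) := fun k =>
    (Real.measurable_log.comp (hell_meas k)).sub (Real.measurable_log.comp (hell_meas 0))
  have hf_eq : ∀ k : Fin K, k ≠ 0 → ∀ (r : Fin K) (c : ℝ),
      f k (r, c) = ((if r = k then (1 : ℝ) else 0) - (if r = 0 then (1 : ℝ) else 0)) * g c := by
    intro k hk r c
    show Real.log (ell K k r c) - Real.log (ell K 0 r c) =
      ((if r = k then (1 : ℝ) else 0) - (if r = 0 then (1 : ℝ) else 0)) * g c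
    rw [hg_def]
    unfold ell
    by_cases h1 : r = k
    · have h2 : r ≠ 0 := fun h => hk (h1.symm.trans h)
      rw [if_pos h1, if_neg h2, if_pos h1, if_neg h2]
      ring
    · by_cases h2 : r = 0
      · rw [if_neg h1, if_pos h2, if_pos h2, if_neg h1]
        ring
      · rw [if_neg h1, if_neg h2, if_neg h1, if_neg h2]
        ring
  set Y : Fin K → ℕ → Ω → ℝ := fun k t ω => f k (R t ω, C t ω) with hY_def
  have hpair_meas : ∀ t, Measurable (fun ω => (R t ω, C t ω)) := fun t =>
    (hRmeas t).prodMk (hCmeas t)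
  have hY_meas : ∀ k t, Measurable (Y k t) := fun k t => (hf_meas k).comp (hpair_meas t)
  -- integrability of g ∘ C 0
  have hGint : Integrable
      (fun ω => |Real.log (C 0 ω)| + |Real.log (1 - C 0 ω)| + |Real.log ((K : ℝ) - 1)|) μ :=
    hint.add (integrable_const _)
  have hgC_bound : ∀ᵐ ω ∂μ, |g (C 0 ω)| ≤
      |Real.log (C 0 ω)| + |Real.log (1 - C 0 ω)| + |Real.log ((K : ℝ) - 1)| := by
    filter_upwards [hC01 0] with ω hω
    have h1 : (1 : ℝ) - C 0 ω ≠ 0 := by have := hω.2; intro h; linarith [h]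
    have hrw : g (C 0 ω) =
        Real.log (C 0 ω) - Real.log (1 - C 0 ω) + Real.log ((K : ℝ) - 1) := by
      rw [hg_def]
      simp only
      rw [Real.log_div h1 (ne_of_gt hKpos)]
      ring
    rw [hrw]
    calc |Real.log (C 0 ω) - Real.log (1 - C 0 ω) + Real.log ((K : ℝ) - 1)|
        ≤ |Real.log (C 0 ω) - Real.log (1 - C 0 ω)| + |Real.log ((K : ℝ) - 1)| := abs_add_le _ _
      _ ≤ |Real.log (C 0 ω)| + |Real.log (1 - C 0 ω)| + |Real.log ((K : ℝ) - 1)| := by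
          have := abs_sub (Real.log (C 0 ω)) (Real.log (1 - C 0 ω))
          linarith
  have hgC_int : Integrable (fun ω => g (C 0 ω)) μ := by
    refine Integrable.mono' hGint (hg_meas.comp (hCmeas 0)).aestronglyMeasurable ?_
    filter_upwards [hgC_bound] with ω h
    simpa [Real.norm_eq_abs] using h
  -- integrability of Y k 0
  have hY0_bound : ∀ k : Fin K, k ≠ 0 → ∀ ω, ‖Y k 0 ω‖ ≤ |g (C 0 ω)| := by
    intro k hk ω
    rw [hY_def]
    simp only [hf_eq k hk (R 0 ω) (C 0 ω), Real.norm_eq_abs, abs_mul]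
    have hb : |(if R 0 ω = k then (1 : ℝ) else 0) - (if R 0 ω = 0 then (1 : ℝ) else 0)| ≤ 1 := by
      split_ifs with h1 h2
      · exact absurd (h1.symm.trans h2) hk
      · norm_num
      · norm_num
      · norm_num
    calc |(if R 0 ω = k then (1 : ℝ) else 0) - (if R 0 ω = 0 then (1 : ℝ) else 0)| * |g (C 0 ω)|
        ≤ 1 * |g (C 0 ω)| := mul_le_mul_of_nonneg_right hb (abs_nonneg _)
      _ = |g (C 0 ω)| := one_mul _
  have hYint : ∀ k : Fin K, k ≠ 0 → Integrable (Y k 0) μ := fun k hk =>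
    Integrable.mono' hgC_int.abs (hY_meas k 0).aestronglyMeasurable
      (Eventually.of_forall (hY0_bound k hk))
  -- strong law of large numbers
  have hSLLN : ∀ k : Fin K, k ≠ 0 → ∀ᵐ ω ∂μ,
      Tendsto (fun n : ℕ => (∑ i ∈ Finset.range n, Y k i ω) / n) atTop (𝓝 (μ[Y k 0])) := by
    intro k hk
    refine strong_law_ae_real _ (hYint k hk) ?_ ?_
    · intro i j hij
      exact (hindep.comp (fun _ => f k) (fun _ => hf_meas k)).indepFun hij
    · intro i
      exact (hident i).comp (hf_meas k)
  -- conditional expectation computation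
  have hm'le : MeasurableSpace.comap (C 0) inferInstance ≤ ‹MeasurableSpace Ω› :=
    (hCmeas 0).comap_le
  haveI : IsFiniteMeasure (μ.trim hm'le) := isFiniteMeasure_trim hm'le
  have hgC_m' : StronglyMeasurable[MeasurableSpace.comap (C 0) inferInstance]
      (fun ω => g (C 0 ω)) :=
    (hg_meas.comp (Measurable.of_comap_le le_rfl)).stronglyMeasurable
  set χ : Fin K → Ω → ℝ := fun j ω => if R 0 ω = j then (1 : ℝ) else 0 with hχ_def
  have hχ_meas : ∀ j, Measurable (χ j) := fun j =>
    Measurable.ite ((hRmeas 0) (measurableSet_singleton j)) measurable_const measurable_const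
  have hχ_int : ∀ j, Integrable (χ j) μ := by
    intro j
    refine Integrable.mono' (integrable_const (1 : ℝ)) (hχ_meas j).aestronglyMeasurable ?_
    refine Eventually.of_forall fun ω => ?_
    rw [hχ_def]
    simp only [Real.norm_eq_abs]
    split_ifs <;> norm_num
  have hχg_int : ∀ j, Integrable (fun ω => g (C 0 ω) * χ j ω) μ := by
    intro j
    refine Integrable.mono' hgC_int.abs
      ((hg_meas.comp (hCmeas 0)).mul (hχ_meas j)).aestronglyMeasurable ?_
    refine Eventually.of_forall fun ω => ?_
    rw [hχ_def]
    simp only [Real.norm_eq_abs, abs_mul]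
    have : |(if R 0 ω = j then (1 : ℝ) else 0)| ≤ 1 := by split_ifs <;> norm_num
    calc |g (C 0 ω)| * |(if R 0 ω = j then (1 : ℝ) else 0)|
        ≤ |g (C 0 ω)| * 1 := mul_le_mul_of_nonneg_left this (abs_nonneg _)
      _ = |g (C 0 ω)| := mul_one _
  have hpull : ∀ j : Fin K, ∫ ω, g (C 0 ω) * χ j ω ∂μ =
      ∫ ω, g (C 0 ω) * (if j = 0 then C 0 ω else (1 - C 0 ω) / ((K : ℝ) - 1)) ∂μ := by
    intro j
    have h1 : μ[(fun ω => g (C 0 ω)) * χ j | MeasurableSpace.comap (C 0) inferInstance]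
        =ᵐ[μ] (fun ω => g (C 0 ω)) * μ[χ j | MeasurableSpace.comap (C 0) inferInstance] :=
      condExp_mul_of_stronglyMeasurable_left hgC_m' (hχg_int j) (hχ_int j)
    calc ∫ ω, g (C 0 ω) * χ j ω ∂μ
        = ∫ ω, (μ[(fun ω => g (C 0 ω)) * χ j |
            MeasurableSpace.comap (C 0) inferInstance]) ω ∂μ := (integral_condExp hm'le).symm
      _ = ∫ ω, g (C 0 ω) * (μ[χ j | MeasurableSpace.comap (C 0) inferInstance]) ω ∂μ :=
          integral_congr_ae (h1.mono fun ω hω => by simpa using hω)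
      _ = ∫ ω, g (C 0 ω) * (if j = 0 then C 0 ω else (1 - C 0 ω) / ((K : ℝ) - 1)) ∂μ := by
          refine integral_congr_ae ?_
          have h2 : μ[χ j | MeasurableSpace.comap (C 0) inferInstance] =ᵐ[μ]
              fun ω => if j = 0 then C 0 ω else (1 - C 0 ω) / ((K : ℝ) - 1) := hcond 0 j
          filter_upwards [h2] with ω hω
          rw [hω]
  -- integrability of the two pieces
  have hψ1_int : Integrable (fun ω => g (C 0 ω) * ((1 - C 0 ω) / ((K : ℝ) - 1))) μ := by
    refine Integrable.mono' hgC_int.abs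
      ((hg_meas.comp (hCmeas 0)).mul
        ((measurable_const.sub (hCmeas 0)).div_const _)).aestronglyMeasurable ?_
    filter_upwards [hC01 0] with ω hω
    simp only [Real.norm_eq_abs, abs_mul]
    have h0 : (0 : ℝ) ≤ (1 - C 0 ω) / ((K : ℝ) - 1) :=
      div_nonneg (by linarith [hω.2]) (le_of_lt hKpos)
    have h1 : (1 - C 0 ω) / ((K : ℝ) - 1) ≤ 1 := by
      rw [div_le_one hKpos]
      have := hω.1
      linarith
    calc |g (C 0 ω)| * |(1 - C 0 ω) / ((K : ℝ) - 1)|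
        ≤ |g (C 0 ω)| * 1 := by
          refine mul_le_mul_of_nonneg_left ?_ (abs_nonneg _)
          rw [abs_of_nonneg h0]; exact h1
      _ = |g (C 0 ω)| := mul_one _
  have hψ2_int : Integrable (fun ω => g (C 0 ω) * C 0 ω) μ := by
    refine Integrable.mono' hgC_int.abs
      ((hg_meas.comp (hCmeas 0)).mul (hCmeas 0)).aestronglyMeasurable ?_
    filter_upwards [hC01 0] with ω hω
    simp only [Real.norm_eq_abs, abs_mul]
    calc |g (C 0 ω)| * |C 0 ω|
        ≤ |g (C 0 ω)| * 1 := by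
          refine mul_le_mul_of_nonneg_left ?_ (abs_nonneg _)
          rw [abs_of_nonneg (le_of_lt hω.1)]
          exact le_of_lt hω.2
      _ = |g (C 0 ω)| := mul_one _
  -- the mean is negative
  have hmean : ∀ k : Fin K, k ≠ 0 → μ[Y k 0] =
      ∫ ω, g (C 0 ω) * ((1 - C 0 ω) / ((K : ℝ) - 1) - C 0 ω) ∂μ := by
    intro k hk
    have hYrw : Y k 0 = fun ω => g (C 0 ω) * χ k ω - g (C 0 ω) * χ 0 ω := by
      funext ω
      rw [hY_def, hχ_def]
      simp only [hf_eq k hk (R 0 ω) (C 0 ω)]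
      ring
    calc μ[Y k 0]
        = ∫ ω, (g (C 0 ω) * χ k ω - g (C 0 ω) * χ 0 ω) ∂μ :=
          integral_congr_ae (Eventually.of_forall fun ω => congrFun hYrw ω)
      _ = (∫ ω, g (C 0 ω) * χ k ω ∂μ) - ∫ ω, g (C 0 ω) * χ 0 ω ∂μ :=
          integral_sub (hχg_int k) (hχg_int 0)
      _ = (∫ ω, g (C 0 ω) * ((1 - C 0 ω) / ((K : ℝ) - 1)) ∂μ) - ∫ ω, g (C 0 ω) * C 0 ω ∂μ := by
          rw [hpull k, hpull 0]
          simp [hk]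
      _ = ∫ ω, (g (C 0 ω) * ((1 - C 0 ω) / ((K : ℝ) - 1)) - g (C 0 ω) * C 0 ω) ∂μ :=
          (integral_sub hψ1_int hψ2_int).symm
      _ = ∫ ω, g (C 0 ω) * ((1 - C 0 ω) / ((K : ℝ) - 1) - C 0 ω) ∂μ := by
          refine integral_congr_ae (Eventually.of_forall fun ω => ?_)
          ring
  have hφ_neg : ∀ᵐ ω ∂μ, g (C 0 ω) * ((1 - C 0 ω) / ((K : ℝ) - 1) - C 0 ω) < 0 := by
    have hne : ∀ᵐ ω ∂μ, ¬(C 0 ω = 1 / (K : ℝ)) := by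
      rw [ae_iff]
      simpa [not_not] using hinfo
    filter_upwards [hC01 0, hne] with ω hω hneω
    have hc0 : 0 < C 0 ω := hω.1
    have hc1 : C 0 ω < 1 := hω.2
    have hq : 0 < (1 - C 0 ω) / ((K : ℝ) - 1) := div_pos (by linarith) hKpos
    have hKne : (K : ℝ) ≠ 0 := by positivity
    have hcq : C 0 ω ≠ (1 - C 0 ω) / ((K : ℝ) - 1) := by
      intro h
      apply hneω
      rw [eq_div_iff (ne_of_gt hKpos)] at h
      rw [eq_div_iff hKne]
      nlinarith [h]
    rcases lt_or_gt_of_ne hcq with h | h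
    · have hlog : Real.log (C 0 ω) < Real.log ((1 - C 0 ω) / ((K : ℝ) - 1)) :=
        Real.log_lt_log hc0 h
      have hgneg : g (C 0 ω) < 0 := by rw [hg_def]; simp only; linarith
      exact mul_neg_of_neg_of_pos hgneg (by linarith)
    · have hlog : Real.log ((1 - C 0 ω) / ((K : ℝ) - 1)) < Real.log (C 0 ω) :=
        Real.log_lt_log hq h
      have hgpos : 0 < g (C 0 ω) := by rw [hg_def]; simp only; linarith
      exact mul_neg_of_pos_of_neg hgpos (by linarith)
  have hLneg : ∀ k : Fin K, k ≠ 0 → μ[Y k 0] < 0 := by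
    intro k hk
    rw [hmean k hk]
    set φ : Ω → ℝ := fun ω => g (C 0 ω) * ((1 - C 0 ω) / ((K : ℝ) - 1) - C 0 ω) with hφ_def
    have hφint : Integrable φ μ := by
      have : φ = fun ω => g (C 0 ω) * ((1 - C 0 ω) / ((K : ℝ) - 1)) - g (C 0 ω) * C 0 ω := by
        funext ω; rw [hφ_def]; ring
      rw [this]
      exact hψ1_int.sub hψ2_int
    have hpos : 0 < ∫ ω, -φ ω ∂μ := by
      rw [integral_pos_iff_support_of_nonneg_ae]
      · have hsupp : ∀ᵐ ω ∂μ, ω ∈ Function.support (fun ω => -φ ω) := by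
          filter_upwards [hφ_neg] with ω hω
          simp only [Function.mem_support, neg_ne_zero]
          exact ne_of_lt hω
        have hcompl : μ (Function.support (fun ω => -φ ω))ᶜ = 0 := by
          have := ae_iff.1 hsupp
          simpa [Set.compl_def] using this
        have hone : (1 : ℝ≥0∞) ≤ μ (Function.support fun ω => -φ ω) := by
          have hle := measure_union_le (μ := μ) (Function.support fun ω => -φ ω)
            (Function.support fun ω => -φ ω)ᶜ
          rw [Set.union_compl_self, hcompl, add_zero, measure_univ] at hle
          exact hle
        exact lt_of_lt_of_le (by norm_num) hone
      · filter_upwards [hφ_neg] with ω hω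
        show (0 : ℝ) ≤ -φ ω
        simp only [hφ_def]
        linarith
      · exact hφint.neg
    have : ∫ ω, -φ ω ∂μ = -∫ ω, φ ω ∂μ := integral_neg φ
    rw [this] at hpos
    linarith
  -- almost sure events
  have hae1 : ∀ᵐ ω ∂μ, ∀ t, C t ω ∈ Set.Ioo (0 : ℝ) 1 := ae_all_iff.2 hC01
  have hae2 : ∀ᵐ ω ∂μ, ∀ k : Fin K, k ≠ 0 →
      Tendsto (fun m => ∑ t ∈ Finset.range m, Y k t ω) atTop atBot := by
    rw [ae_all_iff]
    intro k
    by_cases hk : k = 0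
    · exact Eventually.of_forall fun ω h => absurd hk h
    · filter_upwards [hSLLN k hk] with ω hω _
      exact sum_tendsto_atBot_aux (hLneg k hk) hω
  -- the pointwise analysis
  have hmain : ∀ᵐ ω ∂μ,
      Tendsto (fun m => Xpost K R C 0 m ω) atTop (𝓝 1) ∧
      (∀ k : Fin K, k ≠ 0 → Tendsto (fun m => Xpost K R C k m ω) atTop (𝓝 0)) ∧
      (∀ᶠ m in atTop, ∀ k : Fin K, k ≠ 0 → Xpost K R C k m ω < Xpost K R C 0 m ω) := by
    filter_upwards [hae1, hae2] with ω hC hS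
    have hellpos : ∀ (j : Fin K) t, 0 < ell K j (R t ω) (C t ω) := by
      intro j t
      unfold ell
      split
      · exact (hC t).1
      · exact div_pos (by linarith [(hC t).2]) hKpos
    have hApos : ∀ (j : Fin K) m, 0 < Apost K R C j m ω := fun j m =>
      Finset.prod_pos fun t _ => hellpos j t
    have hkey : ∀ (k : Fin K) m, Real.exp (∑ t ∈ Finset.range m, Y k t ω) =
        Apost K R C k m ω / Apost K R C 0 m ω := by
      intro k m
      rw [Real.exp_sum]
      unfold Apost
      rw [← Finset.prod_div_distrib]
      refine Finset.prod_congr rfl fun t _ => ?_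
      rw [hY_def]
      simp only [hf_def]
      rw [Real.exp_sub, Real.exp_log (hellpos k t), Real.exp_log (hellpos 0 t)]
    have hT : ∀ (k : Fin K) m, Apost K R C k m ω =
        Apost K R C 0 m ω * Real.exp (∑ t ∈ Finset.range m, Y k t ω) := by
      intro k m
      rw [hkey, mul_comm, div_mul_cancel₀ _ (ne_of_gt (hApos 0 m))]
    have hX : ∀ (j : Fin K) m, Xpost K R C j m ω =
        Real.exp (∑ t ∈ Finset.range m, Y j t ω) /
          ∑ k : Fin K, Real.exp (∑ t ∈ Finset.range m, Y k t ω) := by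
      intro j m
      unfold Xpost
      rw [hT j m]
      have hsum : ∑ k : Fin K, Apost K R C k m ω =
          Apost K R C 0 m ω * ∑ k : Fin K, Real.exp (∑ t ∈ Finset.range m, Y k t ω) := by
        rw [Finset.mul_sum]
        exact Finset.sum_congr rfl fun k _ => hT k m
      rw [hsum, mul_div_mul_left _ _ (ne_of_gt (hApos 0 m))]
    have hS0 : ∀ m, (∑ t ∈ Finset.range m, Y 0 t ω) = 0 := fun m =>
      Finset.sum_eq_zero fun t _ => by rw [hY_def]; simp only [hf_def]; exact sub_self _
    have hsum_tendsto : Tendsto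
        (fun m => ∑ k : Fin K, Real.exp (∑ t ∈ Finset.range m, Y k t ω)) atTop (𝓝 1) := by
      have h1 : (1 : ℝ) = ∑ k : Fin K, (if k = 0 then (1 : ℝ) else 0) := by simp
      rw [h1]
      refine tendsto_finset_sum _ fun k _ => ?_
      by_cases hk : k = 0
      · subst hk
        simp only [if_pos rfl]
        have : (fun m => Real.exp (∑ t ∈ Finset.range m, Y 0 t ω)) = fun _ => 1 := by
          funext m; rw [hS0 m, Real.exp_zero]
        rw [this]
        exact tendsto_const_nhds
      · simp only [if_neg hk]
        exact Real.tendsto_exp_atBot.comp (hS k hk)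
    have hden_pos : ∀ m, 0 < ∑ k : Fin K, Real.exp (∑ t ∈ Finset.range m, Y k t ω) := by
      intro m
      exact Finset.sum_pos (fun k _ => Real.exp_pos _) ⟨0, Finset.mem_univ 0⟩
    refine ⟨?_, ?_, ?_⟩
    · have : (fun m => Xpost K R C 0 m ω) =
          fun m => 1 / ∑ k : Fin K, Real.exp (∑ t ∈ Finset.range m, Y k t ω) := by
        funext m
        rw [hX 0 m, hS0 m, Real.exp_zero]
      rw [this]
      have h2 := Tendsto.div (tendsto_const_nhds (x := (1 : ℝ))) hsum_tendsto one_ne_zero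
      rw [show (1 : ℝ) / 1 = 1 from by norm_num] at h2
      exact h2
    · intro k hk
      have : (fun m => Xpost K R C k m ω) =
          fun m => Real.exp (∑ t ∈ Finset.range m, Y k t ω) /
            ∑ k' : Fin K, Real.exp (∑ t ∈ Finset.range m, Y k' t ω) := by
        funext m; rw [hX k m]
      rw [this]
      have h2 := Tendsto.div (Real.tendsto_exp_atBot.comp (hS k hk)) hsum_tendsto one_ne_zero
      rw [show (0 : ℝ) / 1 = 0 from by norm_num] at h2
      exact h2
    · rw [eventually_all]
      intro k
      by_cases hk : k = 0
      · exact Eventually.of_forall fun m h => absurd hk h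
      · have h1 : ∀ᶠ m in atTop, (∑ t ∈ Finset.range m, Y k t ω) < 0 :=
          (hS k hk).eventually (eventually_lt_atBot 0)
        filter_upwards [h1] with m hm _
        rw [hX k m, hX 0 m, hS0 m, Real.exp_zero]
        rw [div_lt_div_iff_of_pos_right (hden_pos m)]
        exact Real.exp_lt_one_iff.2 hm
  -- assemble the conclusions
  refine ⟨hmain.mono fun ω h => h.1, fun k hk => hmain.mono fun ω h => h.2.1 k hk, ?_⟩
  have hA_meas : ∀ (j : Fin K) m, Measurable (fun ω => Apost K R C j m ω) := by
    intro j m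
    unfold Apost
    exact Finset.measurable_prod _ fun t _ => (hell_meas j).comp (hpair_meas t)
  have hX_meas : ∀ (j : Fin K) m, Measurable (fun ω => Xpost K R C j m ω) := by
    intro j m
    unfold Xpost
    exact (hA_meas j m).div (Finset.measurable_sum _ fun k _ => hA_meas k m)
  refine tendsto_measure_one_aux μ ?_ ?_
  · intro m
    have : {ω | ∀ k : Fin K, k ≠ 0 → Xpost K R C k m ω < Xpost K R C 0 m ω} =
        ⋂ k : Fin K, {ω | k ≠ 0 → Xpost K R C k m ω < Xpost K R C 0 m ω} := by
      ext ω; simp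
    rw [this]
    refine MeasurableSet.iInter fun k => ?_
    by_cases hk : k = 0
    · simp [hk]
    · have : {ω | k ≠ 0 → Xpost K R C k m ω < Xpost K R C 0 m ω} =
          {ω | Xpost K R C k m ω < Xpost K R C 0 m ω} := by
        ext ω; simp [hk]
      rw [this]
      exact measurableSet_lt (hX_meas k m) (hX_meas 0 m)
  · exact hmain.mono fun ω h => h.2.2
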